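/- A formula φ is a theorem of the Hilbert system GLS if and only if the second-level sequent ⇛ φ (with empty antecedent) is provable in GLS_seq. -/

import Mathlib

/-- Modal formulas: propositional variables, ⊥, →, □. -/
inductive Formula : Type
  | var : ℕ → Formula
  | bot : Formula
  | imp : Formula → Formula → Formula
  | box : Formula → Formula
deriving DecidableEq

/-- Levels of sequents in GLS_seq: first level (⇒) and second level (⇛). -/
inductive SeqLevel : Type
  | one
  | two
deriving DecidableEq

/-- The set of subformulas of a formula. -/
def Formula.subf : Formula → Finset Formula
  | .var p => {.var p}
  | .bot => {.bot}
  | .imp φ ψ => insert (.imp φ ψ) (φ.subf ∪ ψ.subf)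
  | .box φ => insert (.box φ) φ.subf

/-- SF(Ψ,Φ): all subformulas of formulas in Ψ ∪ Φ. -/
def SF (Ψ Φ : Finset Formula) : Finset Formula := (Ψ ∪ Φ).biUnion Formula.subf

def Formula.isBox : Formula → Bool
  | .box _ => true
  | _ => false

def Formula.unbox : Formula → Formula
  | .box φ => φ
  | φ => φ

/-- Θ_□ = {φ : □φ ∈ Θ}. -/
def boxInv (Θ : Finset Formula) : Finset Formula :=
  (Θ.filter fun ψ => ψ.isBox).image Formula.unbox

/-- The sequent calculus GLS_seq, on sequents of two levels.  The Bool parameter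
records whether the cut rule may be used: `GLSSeq true` is provability in GLS_seq,
`GLSSeq false` is cut-free provability.  The first-level fragment is exactly GL_seq. -/
inductive GLSSeq : Bool → SeqLevel → Finset Formula → Finset Formula → Prop
  | init (c lv φ) : GLSSeq c lv {φ} {φ}
  | initBot (c lv) : GLSSeq c lv {Formula.bot} ∅
  | cut {lv Γ Δ} (φ) : GLSSeq true lv Γ (insert φ Δ) → GLSSeq true lv (insert φ Γ) Δ →
      GLSSeq true lv Γ Δ
  | weak {c lv Γ Δ Γ' Δ'} : Γ ⊆ Γ' → Δ ⊆ Δ' → GLSSeq c lv Γ Δ → GLSSeq c lv Γ' Δ'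
  | impL {c lv Γ Δ φ ψ} : GLSSeq c lv Γ (insert φ Δ) → GLSSeq c lv (insert ψ Γ) Δ →
      GLSSeq c lv (insert (.imp φ ψ) Γ) Δ
  | impR {c lv Γ Δ φ ψ} : GLSSeq c lv (insert φ Γ) (insert ψ Δ) →
      GLSSeq c lv Γ (insert (.imp φ ψ) Δ)
  | boxGL {c Γ φ} : GLSSeq c .one (Γ ∪ Γ.image .box ∪ {.box φ}) {φ} →
      GLSSeq c .one (Γ.image .box) {.box φ}
  | boxL {c Γ Δ} (φ) : GLSSeq c .two (insert φ Γ) Δ → GLSSeq c .two (insert (.box φ) Γ) Δ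
  | lift {c Γ Δ} : GLSSeq c .one Γ Δ → GLSSeq c .two Γ Δ

/-- The sequent calculus GL_seq (on first-level sequents only). -/
inductive GLSeq : Bool → Finset Formula → Finset Formula → Prop
  | init (c φ) : GLSeq c {φ} {φ}
  | initBot (c) : GLSeq c {Formula.bot} ∅
  | cut {Γ Δ} (φ) : GLSeq true Γ (insert φ Δ) → GLSeq true (insert φ Γ) Δ → GLSeq true Γ Δ
  | weak {c Γ Δ Γ' Δ'} : Γ ⊆ Γ' → Δ ⊆ Δ' → GLSeq c Γ Δ → GLSeq c Γ' Δ'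
  | impL {c Γ Δ φ ψ} : GLSeq c Γ (insert φ Δ) → GLSeq c (insert ψ Γ) Δ →
      GLSeq c (insert (.imp φ ψ) Γ) Δ
  | impR {c Γ Δ φ ψ} : GLSeq c (insert φ Γ) (insert ψ Δ) → GLSeq c Γ (insert (.imp φ ψ) Δ)
  | boxGL {c Γ φ} : GLSeq c (Γ ∪ Γ.image .box ∪ {.box φ}) {φ} → GLSeq c (Γ.image .box) {.box φ}

/-- Proof trees of GLS_seq (cut included). -/
inductive GLSTree : SeqLevel → Finset Formula → Finset Formula → Type
  | init (lv φ) : GLSTree lv {φ} {φ}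
  | initBot (lv) : GLSTree lv {Formula.bot} ∅
  | cut {lv Γ Δ} (φ) : GLSTree lv Γ (insert φ Δ) → GLSTree lv (insert φ Γ) Δ → GLSTree lv Γ Δ
  | weak {lv Γ Δ} (Γ' Δ' : Finset Formula) : Γ ⊆ Γ' → Δ ⊆ Δ' → GLSTree lv Γ Δ → GLSTree lv Γ' Δ'
  | impL {lv Γ Δ} (φ ψ) : GLSTree lv Γ (insert φ Δ) → GLSTree lv (insert ψ Γ) Δ →
      GLSTree lv (insert (.imp φ ψ) Γ) Δ
  | impR {lv Γ Δ} (φ ψ) : GLSTree lv (insert φ Γ) (insert ψ Δ) → GLSTree lv Γ (insert (.imp φ ψ) Δ)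
  | boxGL (Γ φ) : GLSTree .one (Γ ∪ Γ.image .box ∪ {.box φ}) {φ} → GLSTree .one (Γ.image .box) {.box φ}
  | boxL {Γ Δ} (φ) : GLSTree .two (insert φ Γ) Δ → GLSTree .two (insert (.box φ) Γ) Δ
  | lift {Γ Δ} : GLSTree .one Γ Δ → GLSTree .two Γ Δ

/-- The set of principal formulas of all (□L) rules occurring in a proof tree. -/
def GLSTree.principals : ∀ {lv Γ Δ}, GLSTree lv Γ Δ → Finset Formula
  | _, _, _, .init _ _ => ∅
  | _, _, _, .initBot _ => ∅
  | _, _, _, .cut _ t₁ t₂ => t₁.principals ∪ t₂.principals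
  | _, _, _, .weak _ _ _ _ t => t.principals
  | _, _, _, .impL _ _ t₁ t₂ => t₁.principals ∪ t₂.principals
  | _, _, _, .impR _ _ t => t.principals
  | _, _, _, .boxGL _ _ t => t.principals
  | _, _, _, .boxL φ t => insert (Formula.box φ) t.principals
  | _, _, _, .lift t => t.principals

/-- A proof tree bundled with its level and conclusion. -/
abbrev PGLSTree : Type :=
  (lv : SeqLevel) × (Γ : Finset Formula) × (Δ : Finset Formula) × GLSTree lv Γ Δ

/-- The set of subproofs of a proof tree (including the tree itself). -/
def GLSTree.subproofs {lv Γ Δ} (t : GLSTree lv Γ Δ) : Set PGLSTree :=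
  insert ⟨lv, Γ, Δ, t⟩ <|
    match lv, Γ, Δ, t with
    | _, _, _, .init _ _ => ∅
    | _, _, _, .initBot _ => ∅
    | _, _, _, .cut _ t₁ t₂ => t₁.subproofs ∪ t₂.subproofs
    | _, _, _, .weak _ _ _ _ t₁ => t₁.subproofs
    | _, _, _, .impL _ _ t₁ t₂ => t₁.subproofs ∪ t₂.subproofs
    | _, _, _, .impR _ _ t₁ => t₁.subproofs
    | _, _, _, .boxGL _ _ t₁ => t₁.subproofs
    | _, _, _, .boxL _ t₁ => t₁.subproofs
    | _, _, _, .lift t₁ => t₁.subproofs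

/-- Kripke satisfaction over a frame `R` with atomic valuation `v`. -/
def KSat {W : Type} (R : W → W → Prop) (v : W → ℕ → Prop) : Formula → W → Prop
  | .var p, w => v w p
  | .bot, _ => False
  | .imp φ ψ, w => KSat R v φ w → KSat R v ψ w
  | .box φ, w => ∀ w', R w w' → KSat R v φ w'

/-- A GL-model: a nonempty, transitive, converse well-founded Kripke model. -/
structure GLModel where
  World : Type
  ne : Nonempty World
  R : World → World → Prop
  trans : Transitive R
  cwf : ∀ f : ℕ → World, ¬ ∀ i, R (f i) (f (i + 1))
  val : World → ℕ → Prop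

/-- Truth of a formula at a world of a GL-model. -/
def GLModel.sat (M : GLModel) (w : M.World) (φ : Formula) : Prop := KSat M.R M.val φ w

/-- Truth of a sequent Γ ▸ Δ at a world: some γ ∈ Γ is false or some δ ∈ Δ is true. -/
def GLModel.seqTrue (M : GLModel) (w : M.World) (Γ Δ : Finset Formula) : Prop :=
  (∃ γ ∈ Γ, ¬ M.sat w γ) ∨ (∃ δ ∈ Δ, M.sat w δ)

/-- w is Σ-reflexive: □α → α is true at w for every □α ∈ Σ. -/
def GLModel.reflexiveFor (M : GLModel) (w : M.World) (S : Finset Formula) : Prop :=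
  ∀ α : Formula, Formula.box α ∈ S → M.sat w ((Formula.box α).imp α)

/-- Saturation conditions (→L), (→R) for first-level sequents. -/
def Saturated1 (Γ Δ : Finset Formula) : Prop :=
  (∀ φ ψ : Formula, φ.imp ψ ∈ Γ → φ ∈ Δ ∨ ψ ∈ Γ) ∧
  (∀ φ ψ : Formula, φ.imp ψ ∈ Δ → φ ∈ Γ ∧ ψ ∈ Δ)

/-- Saturation for second-level sequents: additionally (□L). -/
def Saturated2 (Γ Δ : Finset Formula) : Prop :=
  Saturated1 Γ Δ ∧ ∀ φ : Formula, Formula.box φ ∈ Γ → φ ∈ Γ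

def Saturated : SeqLevel → Finset Formula → Finset Formula → Prop
  | .one => Saturated1
  | .two => Saturated2

/-- The Hilbert system GL. -/
inductive GLHilbert : Formula → Prop
  | ax1 (φ ψ : Formula) : GLHilbert (φ.imp (ψ.imp φ))
  | ax2 (φ ψ χ : Formula) :
      GLHilbert ((φ.imp (ψ.imp χ)).imp ((φ.imp ψ).imp (φ.imp χ)))
  | ax3 (φ : Formula) : GLHilbert (((φ.imp .bot).imp .bot).imp φ)
  | axK (φ ψ : Formula) :
      GLHilbert ((Formula.box (φ.imp ψ)).imp ((Formula.box φ).imp (Formula.box ψ)))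
  | axLob (φ : Formula) :
      GLHilbert ((Formula.box ((Formula.box φ).imp φ)).imp (Formula.box φ))
  | mp {φ ψ} : GLHilbert (φ.imp ψ) → GLHilbert φ → GLHilbert ψ
  | nec {φ} : GLHilbert φ → GLHilbert (Formula.box φ)

/-- The Hilbert system GLS: theorems of GL and all □α → α, closed under modus ponens. -/
inductive GLSHilbert : Formula → Prop
  | gl {φ} : GLHilbert φ → GLSHilbert φ
  | refl (α : Formula) : GLSHilbert ((Formula.box α).imp α)
  | mp {φ ψ} : GLSHilbert (φ.imp ψ) → GLSHilbert φ → GLSHilbert ψ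

/-- Conjunction (encoded with → and ⊥) of a list of formulas; empty conjunction is ⊤. -/
def Formula.conj : List Formula → Formula
  | [] => Formula.bot.imp Formula.bot
  | φ :: l => ((φ.imp ((Formula.conj l).imp .bot)).imp .bot)

/-- Membership predicate for the canonical model: saturated first-level sequents over S
that are not cut-free provable in GLS_seq. -/
def W0pred (S : Finset Formula) (s : Finset Formula × Finset Formula) : Prop :=
  Saturated1 s.1 s.2 ∧ ¬ GLSSeq false SeqLevel.one s.1 s.2 ∧ s.1 ∪ s.2 ⊆ S

/-- Worlds of the canonical model. -/
def W0 (S : Finset Formula) : Type := {s : Finset Formula × Finset Formula // W0pred S s}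

/-- Accessibility of the canonical model: (Γ⇒Δ) R₀ (Γ'⇒Δ') iff Γ_□ ⊊ Γ'_□ and Γ_□ ⊆ Γ'. -/
def R0 (S : Finset Formula) (s t : W0 S) : Prop :=
  boxInv s.1.1 ⊂ boxInv t.1.1 ∧ boxInv s.1.1 ⊆ t.1.1

/-- Valuation of the canonical model: p is true at (Γ⇒Δ) iff p ∈ Γ. -/
def V0 (S : Finset Formula) (s : W0 S) (p : ℕ) : Prop := Formula.var p ∈ s.1.1

/-- The extended set of worlds W = W₀ ∪ ℕ. -/
def Wext (S : Finset Formula) : Type := W0 S ⊕ ℕ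

/-- The extended accessibility relation, with distinguished world `wp` in W₀. -/
def Rext (S : Finset Formula) (wp : W0 S) : Wext S → Wext S → Prop
  | Sum.inl x, Sum.inl y => R0 S x y
  | Sum.inr _, Sum.inl y => y = wp ∨ R0 S wp y
  | Sum.inr n, Sum.inr m => m < n
  | Sum.inl _, Sum.inr _ => False

/-- The extended valuation: worlds in ℕ behave like the distinguished world `wp`. -/
def Vext (S : Finset Formula) (wp : W0 S) : Wext S → ℕ → Prop
  | Sum.inl x, p => V0 S x p
  | Sum.inr _, p => V0 S wp p
/-! ### Auxiliary development -/

namespace GLSaux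

/-- Hilbert-style derivations from a set of assumptions over a base theory `B`. -/
inductive Der (B : Formula → Prop) (A : Set Formula) : Formula → Prop
  | ax {φ} : φ ∈ A → Der B A φ
  | base {φ} : B φ → Der B A φ
  | mp {φ ψ} : Der B A (φ.imp ψ) → Der B A φ → Der B A ψ

/-- A base theory containing the propositional axiom schemes. -/
def Good (B : Formula → Prop) : Prop :=
  (∀ φ ψ : Formula, B (φ.imp (ψ.imp φ))) ∧
  (∀ φ ψ χ : Formula, B ((φ.imp (ψ.imp χ)).imp ((φ.imp ψ).imp (φ.imp χ)))) ∧
  (∀ φ : Formula, B (((φ.imp .bot).imp .bot).imp φ))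

lemma goodGL : Good GLHilbert := ⟨GLHilbert.ax1, GLHilbert.ax2, GLHilbert.ax3⟩
lemma goodGLS : Good GLSHilbert :=
  ⟨fun a b => .gl (.ax1 a b), fun a b c => .gl (.ax2 a b c), fun a => .gl (.ax3 a)⟩

variable {B : Formula → Prop} {A A' : Set Formula} {φ ψ χ : Formula}

lemma Der.mono (h : A ⊆ A') : Der B A φ → Der B A' φ := by
  intro d; induction d with
  | ax hm => exact .ax (h hm)
  | base hb => exact .base hb
  | mp _ _ ih1 ih2 => exact .mp ih1 ih2

lemma Der.map {B' : Formula → Prop} (h : ∀ χ, B χ → B' χ) : Der B A φ → Der B' A φ := by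
  intro d; induction d with
  | ax hm => exact .ax hm
  | base hb => exact .base (h _ hb)
  | mp _ _ ih1 ih2 => exact .mp ih1 ih2

lemma der_id (hB : Good B) : Der B A (φ.imp φ) :=
  .mp (.mp (.base (hB.2.1 φ (φ.imp φ) φ)) (.base (hB.1 φ (φ.imp φ)))) (.base (hB.1 φ φ))

/-- Deduction theorem. -/
lemma ded (hB : Good B) (h : Der B (insert φ A) ψ) : Der B A (φ.imp ψ) := by
  induction h with
  | @ax χ hm =>
    rcases hm with rfl | hm
    · exact der_id hB
    · exact .mp (.base (hB.1 _ _)) (.ax hm)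
  | base hb => exact .mp (.base (hB.1 _ _)) (.base hb)
  | mp _ _ ih1 ih2 => exact .mp (.mp (.base (hB.2.1 _ _ _)) ih1) ih2

lemma undisch (h : Der B A (φ.imp ψ)) : Der B (insert φ A) ψ :=
  .mp (h.mono (Set.subset_insert _ _)) (.ax (Set.mem_insert _ _))

lemma dne (hB : Good B) (h : Der B A ((φ.imp .bot).imp .bot)) : Der B A φ :=
  .mp (.base (hB.2.2 φ)) h

lemma efq (hB : Good B) (h : Der B A Formula.bot) : Der B A φ :=
  dne hB (.mp (.base (hB.1 .bot (φ.imp .bot))) h)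

lemma comp (hB : Good B) (h1 : Der B A (φ.imp ψ)) (h2 : Der B A (ψ.imp χ)) :
    Der B A (φ.imp χ) :=
  ded hB (.mp (h2.mono (Set.subset_insert _ _)) (undisch h1))

def MpClosed (B : Formula → Prop) : Prop := ∀ φ ψ : Formula, B (φ.imp ψ) → B φ → B ψ

lemma der_elim (hmp : MpClosed B) (hA : ∀ χ ∈ A, B χ) (h : Der B A φ) : B φ := by
  induction h with
  | ax hm => exact hA _ hm
  | base hb => exact hb
  | mp _ _ ih1 ih2 => exact hmp _ _ ih1 ih2

lemma elimGL (h : Der GLHilbert ∅ φ) : GLHilbert φ :=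
  der_elim (fun _ _ => GLHilbert.mp) (fun _ h => h.elim) h

lemma elimGLS (h : Der GLSHilbert ∅ φ) : GLSHilbert φ :=
  der_elim (fun _ _ => GLSHilbert.mp) (fun _ h => h.elim) h

lemma gl_comp (h1 : GLHilbert (φ.imp ψ)) (h2 : GLHilbert (ψ.imp χ)) :
    GLHilbert (φ.imp χ) :=
  elimGL (comp goodGL (.base h1) (.base h2))

/-- The 4 axiom □α → □□α is a theorem of GL. -/
lemma gl_four (α : Formula) : GLHilbert ((Formula.box α).imp (Formula.box (Formula.box α))) := by
  set nb : Formula := (Formula.box α).imp .bot with hnb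
  set C : Formula := (α.imp nb).imp .bot with hC
  -- t0 : C → α
  have t0 : GLHilbert (C.imp α) := by
    apply elimGL; apply ded goodGL; apply dne goodGL; apply ded goodGL
    set S : Set Formula := insert (α.imp .bot) (insert C ∅) with hS
    have h1 : Der GLHilbert S (α.imp .bot) := .ax (by simp [hS])
    have h2 : Der GLHilbert S (α.imp nb) :=
      ded goodGL (efq goodGL (.mp (h1.mono (Set.subset_insert _ _)) (.ax (Set.mem_insert _ _))))
    exact .mp (.ax (show C ∈ S by simp [hS])) h2
  -- t1 : C → □α
  have t1 : GLHilbert (C.imp (Formula.box α)) := by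
    apply elimGL; apply ded goodGL; apply dne goodGL; apply ded goodGL
    set S : Set Formula := insert nb (insert C ∅) with hS
    have h1 : Der GLHilbert S nb := .ax (by simp [hS])
    have h2 : Der GLHilbert S (α.imp nb) := .mp (.base (goodGL.1 nb α)) h1
    exact .mp (.ax (show C ∈ S by simp [hS])) h2
  -- t3 : α → □α → C
  have t3 : GLHilbert (α.imp ((Formula.box α).imp C)) := by
    apply elimGL; apply ded goodGL; apply ded goodGL; apply ded goodGL
    set S : Set Formula := insert (α.imp nb) (insert (Formula.box α) (insert α ∅)) with hS
    have h1 : Der GLHilbert S nb :=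
      .mp (.ax (show α.imp nb ∈ S by simp [hS])) (.ax (show α ∈ S by simp [hS]))
    exact .mp h1 (.ax (show Formula.box α ∈ S by simp [hS]))
  -- s1 : α → (□C → C)
  have s1 : GLHilbert (α.imp ((Formula.box C).imp C)) := by
    apply elimGL; apply ded goodGL; apply ded goodGL
    set S : Set Formula := insert (Formula.box C) (insert α ∅) with hS
    have hca : GLHilbert ((Formula.box C).imp (Formula.box α)) :=
      GLHilbert.mp (GLHilbert.axK C α) (GLHilbert.nec t0)
    have hba : Der GLHilbert S (Formula.box α) :=
      .mp (.base hca) (.ax (show Formula.box C ∈ S by simp [hS]))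
    exact .mp (.mp (.base t3) (.ax (show α ∈ S by simp [hS]))) hba
  have s2 : GLHilbert ((Formula.box α).imp (Formula.box ((Formula.box C).imp C))) :=
    GLHilbert.mp (GLHilbert.axK _ _) (GLHilbert.nec s1)
  have s4 : GLHilbert ((Formula.box C).imp (Formula.box (Formula.box α))) :=
    GLHilbert.mp (GLHilbert.axK _ _) (GLHilbert.nec t1)
  exact gl_comp (gl_comp s2 (GLHilbert.axLob C)) s4



/-! ### List deduction and K-distribution -/

lemma ded_list (hB : Good B) :
    ∀ (l : List Formula) (A : Set Formula) (φ : Formula),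
      Der B (A ∪ {x | x ∈ l}) φ → Der B A (l.foldr .imp φ)
  | [], A, φ, h => h.mono (by simp)
  | a :: l, A, φ, h => by
    have h' : Der B ((insert a A) ∪ {x | x ∈ l}) φ := by
      apply h.mono; intro x hx
      rcases hx with hx | hx
      · exact Or.inl (Set.mem_insert_of_mem _ hx)
      · rcases List.mem_cons.1 hx with rfl | hx
        · exact Or.inl (Set.mem_insert _ _)
        · exact Or.inr hx
    exact ded hB (ded_list hB l (insert a A) φ h')

lemma foldrK :
    ∀ (l : List Formula) (A : Set Formula) (ψ : Formula),
      Der GLHilbert A (Formula.box (l.foldr .imp ψ)) →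
      (∀ a ∈ l, Der GLHilbert A (Formula.box a)) → Der GLHilbert A (Formula.box ψ)
  | [], _, _, h, _ => h
  | a :: l, A, ψ, h, hl => by
    have h1 : Der GLHilbert A (Formula.box (l.foldr .imp ψ)) :=
      .mp (.mp (.base (GLHilbert.axK a (l.foldr .imp ψ))) h) (hl a List.mem_cons_self)
    exact foldrK l A ψ h1 fun b hb => hl b (List.mem_cons_of_mem a hb)

/-! ### Soundness of GLS_seq w.r.t. the Hilbert systems -/

def fneg (φ : Formula) : Formula := φ.imp .bot

def BaseOf : SeqLevel → Formula → Prop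
  | .one => GLHilbert
  | .two => GLSHilbert

lemma goodBaseOf (lv : SeqLevel) : Good (BaseOf lv) := by
  cases lv
  · exact goodGL
  · exact goodGLS

lemma setL (Γ Δ : Finset Formula) (φ : Formula) :
    (↑(insert φ Γ) ∪ fneg '' ↑Δ : Set Formula) = insert φ (↑Γ ∪ fneg '' ↑Δ) := by
  rw [Finset.coe_insert, Set.insert_union]

lemma setR (Γ Δ : Finset Formula) (δ : Formula) :
    (↑Γ ∪ fneg '' ↑(insert δ Δ) : Set Formula) = insert (fneg δ) (↑Γ ∪ fneg '' ↑Δ) := by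
  rw [Finset.coe_insert, Set.image_insert_eq, Set.union_insert]

lemma seq_sound {c lv Γ Δ} (h : GLSSeq c lv Γ Δ) :
    Der (BaseOf lv) (↑Γ ∪ fneg '' ↑Δ) Formula.bot := by
  induction h with
  | init c lv φ =>
    exact .mp (.ax (Or.inr ⟨φ, by simp, rfl⟩)) (.ax (Or.inl (by simp)))
  | initBot c lv =>
    exact .ax (Or.inl (by simp))
  | @cut lv Γ Δ φ _ _ ih1 ih2 =>
    have hB := goodBaseOf lv
    rw [setR] at ih1
    rw [setL] at ih2
    exact .mp (ded hB ih2) (dne hB (ded hB ih1))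
  | @weak c lv Γ Δ Γ' Δ' hG hD _ ih =>
    exact ih.mono (Set.union_subset_union (by exact_mod_cast hG) (Set.image_mono (by exact_mod_cast hD)))
  | @impL c lv Γ Δ φ ψ _ _ ih1 ih2 =>
    have hB := goodBaseOf lv
    rw [setR] at ih1
    rw [setL] at ih2
    rw [setL]
    set X : Set Formula := ↑Γ ∪ fneg '' ↑Δ
    have hφ : Der (BaseOf lv) X φ := dne hB (ded hB ih1)
    have hψ : Der (BaseOf lv) (insert (φ.imp ψ) X) ψ :=
      .mp (.ax (Set.mem_insert _ _)) (hφ.mono (Set.subset_insert _ _))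
    exact .mp ((ded hB ih2).mono (Set.subset_insert _ _)) hψ
  | @impR c lv Γ Δ φ ψ _ ih =>
    have hB := goodBaseOf lv
    have hset : (↑(insert φ Γ) ∪ fneg '' ↑(insert ψ Δ) : Set Formula)
        = insert φ (insert (fneg ψ) (↑Γ ∪ fneg '' ↑Δ)) := by
      ext x; simp [fneg]; tauto
    rw [hset] at ih
    rw [setR]
    set X : Set Formula := ↑Γ ∪ fneg '' ↑Δ
    set Y : Set Formula := insert (fneg (φ.imp ψ)) X with hY
    set Z : Set Formula := insert (fneg ψ) Y with hZ
    have h1 : Der (BaseOf lv) (insert (fneg ψ) X) (φ.imp .bot) := ded hB ih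
    have h2 : Der (BaseOf lv) Z (φ.imp .bot) := by
      apply h1.mono; rw [hZ, hY]
      exact Set.insert_subset_insert (Set.subset_insert _ _)
    have hbimp : Der (BaseOf lv) Z (Formula.bot.imp ψ) :=
      ded hB (efq hB (.ax (Set.mem_insert _ _)))
    have h3 : Der (BaseOf lv) Z (φ.imp ψ) := comp hB h2 hbimp
    have h4 : Der (BaseOf lv) Z Formula.bot :=
      .mp (.ax (show fneg (φ.imp ψ) ∈ Z by rw [hZ, hY]; simp)) h3
    have h5 : Der (BaseOf lv) Y ψ := dne hB (ded hB h4)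
    have h6 : Der (BaseOf lv) Y (φ.imp ψ) := .mp (.base (hB.1 ψ φ)) h5
    exact .mp (.ax (Set.mem_insert _ _)) h6
  | @boxGL c Γ φ _ ih =>
    have hB := goodGL
    set L : List Formula := Γ.toList ++ Γ.toList.map Formula.box with hL
    have hset : (↑(Γ ∪ Γ.image Formula.box ∪ {Formula.box φ}) ∪ fneg '' ↑({φ} : Finset Formula)
        : Set Formula)
        = insert (fneg φ) (insert (Formula.box φ) ((∅ : Set Formula) ∪ {x | x ∈ L})) := by
      ext x
      simp only [hL, Finset.coe_union, Finset.coe_singleton, Set.mem_union, Set.mem_insert_iff,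
        Set.mem_image, Finset.mem_coe, Finset.mem_image, Set.mem_singleton_iff,
        Set.mem_setOf_eq, List.mem_append, List.mem_map, Finset.mem_toList,
        Set.mem_empty_iff_false]
      aesop
    rw [hset] at ih
    have h1 : Der GLHilbert ((∅ : Set Formula) ∪ {x | x ∈ L})
        ((Formula.box φ).imp φ) := by
      apply ded hB
      exact dne hB (ded hB (ih.mono (by intro x; simp; tauto)))
    have h2 : GLHilbert (L.foldr .imp ((Formula.box φ).imp φ)) :=
      elimGL (ded_list hB L ∅ _ h1)
    -- now work in the target context
    have hgoal : (↑(Finset.image Formula.box Γ) ∪ fneg '' ↑({Formula.box φ} : Finset Formula)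
        : Set Formula) = insert (fneg (Formula.box φ)) ↑(Finset.image Formula.box Γ) := by
      ext x; simp [fneg]
    rw [hgoal]
    set Y : Set Formula := insert (fneg (Formula.box φ)) ↑(Finset.image Formula.box Γ) with hY
    have hboxmem : ∀ a ∈ L, Der GLHilbert Y (Formula.box a) := by
      intro a ha
      rcases List.mem_append.1 ha with ha | ha
      · exact .ax (by
          rw [hY]
          exact Set.mem_insert_of_mem _
            (by exact_mod_cast Finset.mem_image_of_mem _ (Finset.mem_toList.1 ha)))
      · rcases List.mem_map.1 ha with ⟨b, hb, rfl⟩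
        have hbb : Der GLHilbert Y (Formula.box b) := .ax (by
          rw [hY]
          exact Set.mem_insert_of_mem _
            (by exact_mod_cast Finset.mem_image_of_mem _ (Finset.mem_toList.1 hb)))
        exact .mp (.base (gl_four b)) hbb
    have h3 : Der GLHilbert Y (Formula.box ((Formula.box φ).imp φ)) :=
      foldrK L Y _ (.base (GLHilbert.nec h2)) hboxmem
    have h4 : Der GLHilbert Y (Formula.box φ) := .mp (.base (GLHilbert.axLob φ)) h3
    exact .mp (.ax (show fneg (Formula.box φ) ∈ Y by rw [hY]; simp)) h4
  | @boxL c Γ Δ φ _ ih =>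
    have hB := goodGLS
    rw [setL] at ih
    rw [setL]
    set X : Set Formula := ↑Γ ∪ fneg '' ↑Δ
    have hφ : Der GLSHilbert (insert (Formula.box φ) X) φ :=
      .mp (.base (GLSHilbert.refl φ)) (.ax (Set.mem_insert _ _))
    exact .mp ((ded hB ih).mono (Set.subset_insert _ _)) hφ
  | @lift c Γ Δ _ ih =>
    exact ih.map fun _ h => GLSHilbert.gl h


/-! ### Forward direction: Hilbert to sequents -/

lemma seqAx {c lv Γ Δ} (φ : Formula) (h1 : φ ∈ Γ) (h2 : φ ∈ Δ) : GLSSeq c lv Γ Δ :=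
  .weak (Finset.singleton_subset_iff.2 h1) (Finset.singleton_subset_iff.2 h2) (.init c lv φ)

lemma seqBot {c lv Γ Δ} (h : Formula.bot ∈ Γ) : GLSSeq c lv Γ Δ :=
  .weak (Finset.singleton_subset_iff.2 h) (Finset.empty_subset _) (.initBot c lv)

lemma impL' {c lv Γ Δ} {φ ψ : Formula} (h : φ.imp ψ ∈ Γ)
    (h1 : GLSSeq c lv Γ (insert φ Δ)) (h2 : GLSSeq c lv (insert ψ Γ) Δ) : GLSSeq c lv Γ Δ := by
  have := GLSSeq.impL h1 h2
  rwa [Finset.insert_eq_self.2 h] at this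

lemma impR' {c lv Γ Δ} {φ ψ : Formula} (h : φ.imp ψ ∈ Δ)
    (h1 : GLSSeq c lv (insert φ Γ) (insert ψ Δ)) : GLSSeq c lv Γ Δ := by
  have := GLSSeq.impR h1
  rwa [Finset.insert_eq_self.2 h] at this

lemma seq_of_gl {φ : Formula} (h : GLHilbert φ) : GLSSeq true SeqLevel.one ∅ {φ} := by
  induction h with
  | ax1 φ ψ =>
    refine impR' (φ := φ) (ψ := ψ.imp φ) (by simp) (impR' (φ := ψ) (ψ := φ) (by simp) ?_)
    exact seqAx φ (by simp) (by simp)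
  | ax2 φ ψ χ =>
    refine impR' (φ := φ.imp (ψ.imp χ)) (ψ := (φ.imp ψ).imp (φ.imp χ)) (by simp)
      (impR' (φ := φ.imp ψ) (ψ := φ.imp χ) (by simp)
        (impR' (φ := φ) (ψ := χ) (by simp) ?_))
    refine impL' (φ := φ) (ψ := ψ) (by simp) (seqAx φ (by simp) (by simp)) ?_
    refine impL' (φ := φ) (ψ := ψ.imp χ) (by simp) (seqAx φ (by simp) (by simp)) ?_
    refine impL' (φ := ψ) (ψ := χ) (by simp) (seqAx ψ (by simp) (by simp)) ?_
    exact seqAx χ (by simp) (by simp)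
  | ax3 φ =>
    refine impR' (φ := (φ.imp .bot).imp .bot) (ψ := φ) (by simp) ?_
    refine impL' (φ := φ.imp .bot) (ψ := Formula.bot) (by simp) ?_ (seqBot (by simp))
    refine impR' (φ := φ) (ψ := Formula.bot) (by simp) ?_
    exact seqAx φ (by simp) (by simp)
  | axK φ ψ =>
    refine impR' (φ := Formula.box (φ.imp ψ)) (ψ := (Formula.box φ).imp (Formula.box ψ))
      (by simp) (impR' (φ := Formula.box φ) (ψ := Formula.box ψ) (by simp) ?_)
    have himg : ({φ.imp ψ, φ} : Finset Formula).image Formula.box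
        = {Formula.box (φ.imp ψ), Formula.box φ} := by
      simp [Finset.image_insert]
    have hprem : GLSSeq true SeqLevel.one
        (({φ.imp ψ, φ} : Finset Formula) ∪ ({φ.imp ψ, φ} : Finset Formula).image Formula.box
          ∪ {Formula.box ψ}) {ψ} := by
      refine impL' (φ := φ) (ψ := ψ) (by simp) (seqAx φ (by simp) (by simp)) ?_
      exact seqAx ψ (by simp) (by simp)
    have hbox := GLSSeq.boxGL hprem
    rw [himg] at hbox
    exact hbox.weak (by intro x; simp; tauto) (by simp)
  | axLob φ =>
    refine impR' (φ := Formula.box ((Formula.box φ).imp φ)) (ψ := Formula.box φ) (by simp) ?_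
    have himg : ({(Formula.box φ).imp φ} : Finset Formula).image Formula.box
        = {Formula.box ((Formula.box φ).imp φ)} := by simp
    have hprem : GLSSeq true SeqLevel.one
        (({(Formula.box φ).imp φ} : Finset Formula)
          ∪ ({(Formula.box φ).imp φ} : Finset Formula).image Formula.box
          ∪ {Formula.box φ}) {φ} := by
      refine impL' (φ := Formula.box φ) (ψ := φ) (by simp)
        (seqAx (Formula.box φ) (by simp) (by simp)) ?_
      exact seqAx φ (by simp) (by simp)
    have hbox := GLSSeq.boxGL hprem
    rw [himg] at hbox
    exact hbox.weak (by simp) (by simp)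
  | @mp φ ψ _ _ ih1 ih2 =>
    refine GLSSeq.cut (φ.imp ψ) (ih1.weak (by simp) (by simp)) ?_
    refine impL' (φ := φ) (ψ := ψ) (by simp) ?_ (seqAx ψ (by simp) (by simp))
    exact ih2.weak (by simp) (by simp)
  | @nec φ _ ih =>
    have h : GLSSeq true SeqLevel.one
        ((∅ : Finset Formula) ∪ (∅ : Finset Formula).image Formula.box ∪ {Formula.box φ})
        {φ} := ih.weak (by simp) (by simp)
    have hbox := GLSSeq.boxGL h
    simpa using hbox

lemma seq_of_gls {φ : Formula} (h : GLSHilbert φ) : GLSSeq true SeqLevel.two ∅ {φ} := by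
  induction h with
  | gl h => exact .lift (seq_of_gl h)
  | refl α =>
    refine impR' (φ := Formula.box α) (ψ := α) (by simp) ?_
    exact GLSSeq.boxL α (seqAx α (by simp) (by simp))
  | @mp φ ψ _ _ ih1 ih2 =>
    refine GLSSeq.cut (φ.imp ψ) (ih1.weak (by simp) (by simp)) ?_
    refine impL' (φ := φ) (ψ := ψ) (by simp) ?_ (seqAx ψ (by simp) (by simp))
    exact ih2.weak (by simp) (by simp)

end GLSaux

/-- φ is a theorem of the Hilbert system GLS iff the second-level sequent ⇛ φ is
provable in GLS_seq. -/
theorem glsHilbert_iff_glsSeq (φ : Formula) :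
    GLSHilbert φ ↔ GLSSeq true SeqLevel.two ∅ {φ} := by
  constructor
  · exact GLSaux.seq_of_gls
  · intro h
    have hd := GLSaux.seq_sound h
    have hset : ((↑(∅ : Finset Formula) ∪ GLSaux.fneg '' ↑({φ} : Finset Formula)) : Set Formula)
        = insert (GLSaux.fneg φ) ∅ := by
      ext x; simp [GLSaux.fneg]
    rw [hset] at hd
    have h1 : GLSaux.Der GLSHilbert ∅ ((φ.imp .bot).imp .bot) := GLSaux.ded GLSaux.goodGLS hd
    exact GLSaux.elimGLS (GLSaux.dne GLSaux.goodGLS h1)
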